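/- Let f : ℝᵈ → ℝ be twice continuously differentiable and α-strongly convex. Let η > 0 and let the proximal point iterates be defined by x_{k+1} = argmin_x { f(x) + ‖x - x_k‖²/(2η) }, equivalently x_{k+1} = x_k - η∇f(x_{k+1}). Then for all k ≥ 0, ‖∇f(x_k)‖² ≤ ‖∇f(x_0)‖² / (1 + αη)^{2k}. -/

import Mathlib

open Real

-- auxiliary: gradient is differentiable for C² f
lemma grad_diff {d : ℕ} {f : EuclideanSpace ℝ (Fin d) → ℝ} (hf : ContDiff ℝ 2 f) :
    Differentiable ℝ (gradient f) := by
  have h1 : ContDiff ℝ 1 (fderiv ℝ f) := hf.fderiv_right (by norm_num)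
  have : gradient f = fun x => (InnerProductSpace.toDual ℝ _).symm (fderiv ℝ f x) := rfl
  rw [this]
  exact (InnerProductSpace.toDual ℝ _).symm.differentiable.comp (h1.differentiable one_ne_zero)

lemma strong_mono {d : ℕ} {f : EuclideanSpace ℝ (Fin d) → ℝ} {α : ℝ}
    (hf : ContDiff ℝ 2 f)
    (hconv : ∀ x v : EuclideanSpace ℝ (Fin d),
      α * ‖v‖ ^ 2 ≤ (inner ℝ (fderiv ℝ (gradient f) x v) v : ℝ))
    (a b : EuclideanSpace ℝ (Fin d)) :
    α * ‖a - b‖ ^ 2 ≤ (inner ℝ (gradient f a - gradient f b) (a - b) : ℝ) := by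
  set v := a - b with hv
  have hgd := grad_diff hf
  set C := α * ‖v‖ ^ 2 with hC
  have key : ∀ t : ℝ, HasDerivAt (fun t : ℝ => (inner ℝ (gradient f (b + t • v)) v : ℝ) - C * t)
      ((inner ℝ (fderiv ℝ (gradient f) (b + t • v) v) v : ℝ) - C) t := by
    intro t
    have hc : HasDerivAt (fun t : ℝ => b + t • v) v t := by
      simpa using ((hasDerivAt_id t).smul_const v).const_add b
    have hu : HasDerivAt (fun t : ℝ => gradient f (b + t • v))
        (fderiv ℝ (gradient f) (b + t • v) v) t :=
      HasFDerivAt.comp_hasDerivAt (l := gradient f) (f := fun t : ℝ => b + t • v) t (hgd (b + t • v)).hasFDerivAt hc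
    have := (hu.inner ℝ (hasDerivAt_const t v))
    have h2 := this.sub ((hasDerivAt_id t).const_mul C)
    rw [inner_zero_right, zero_add, mul_one] at h2
    exact h2
  have hmono : Monotone (fun t : ℝ => (inner ℝ (gradient f (b + t • v)) v : ℝ) - C * t) := by
    apply monotone_of_deriv_nonneg
    · exact fun t => (key t).differentiableAt
    · intro t
      rw [(key t).deriv]
      have := hconv (b + t • v) v
      linarith
  have h01 := hmono (show (0:ℝ) ≤ 1 by norm_num)
  simp only [zero_smul, add_zero, one_smul, mul_zero, mul_one, sub_zero] at h01
  have hba : b + v = a := by rw [hv]; abel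
  rw [hba] at h01
  rw [inner_sub_left]
  linarith

theorem proximal_point_sq_grad_norm_decay
    (d : ℕ) (f : EuclideanSpace ℝ (Fin d) → ℝ) (α η : ℝ) (hα : 0 < α) (hη : 0 < η)
    (hf : ContDiff ℝ 2 f)
    (hconv : ∀ x v : EuclideanSpace ℝ (Fin d),
      α * ‖v‖ ^ 2 ≤ (inner ℝ (fderiv ℝ (gradient f) x v) v : ℝ))
    (x : ℕ → EuclideanSpace ℝ (Fin d))
    (hiter : ∀ k : ℕ, x (k + 1) = x k - η • gradient f (x (k + 1))) :
    ∀ k : ℕ, ‖gradient f (x k)‖ ^ 2 ≤ ‖gradient f (x 0)‖ ^ 2 / (1 + α * η) ^ (2 * k) := by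
  set g := fun k => gradient f (x k) with hg
  have hpos : (0:ℝ) < 1 + α * η := by positivity
  have step : ∀ k, ‖g (k+1)‖ ^ 2 ≤ ‖g k‖ ^ 2 / (1 + α * η) ^ 2 := by
    intro k
    have hd : x k - x (k+1) = η • g (k+1) := by
      rw [hiter k]; abel
    have hm := strong_mono hf hconv (x k) (x (k+1))
    rw [hd] at hm
    have hinner : (inner ℝ (g k - g (k+1)) (η • g (k+1)) : ℝ)
        = η * ((inner ℝ (g k) (g (k+1)) : ℝ) - ‖g (k+1)‖ ^ 2) := by
      rw [real_inner_smul_right, inner_sub_left, real_inner_self_eq_norm_sq]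
    rw [hinner, norm_smul] at hm
    have hm' : (1 + α * η) * ‖g (k+1)‖ ^ 2 ≤ (inner ℝ (g k) (g (k+1)) : ℝ) := by
      have h2 : α * η^2 * ‖g (k+1)‖^2 ≤ η * ((inner ℝ (g k) (g (k+1)) : ℝ) - ‖g (k+1)‖ ^ 2) := by
        calc α * η^2 * ‖g (k+1)‖^2 = α * (‖η‖ * ‖g (k+1)‖)^2 := by
              rw [Real.norm_eq_abs, abs_of_pos hη]; ring
          _ ≤ _ := hm
      nlinarith
    have hcs : (inner ℝ (g k) (g (k+1)) : ℝ) ≤ ‖g k‖ * ‖g (k+1)‖ := real_inner_le_norm _ _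
    rcases eq_or_lt_of_le (norm_nonneg (g (k+1))) with h0 | h0
    · rw [← h0]; norm_num; positivity
    · have hle : (1 + α * η) * ‖g (k+1)‖ ≤ ‖g k‖ := by
        have := hm'.trans hcs
        nlinarith
      rw [le_div_iff₀ (by positivity)]
      nlinarith [norm_nonneg (g k)]
  intro k
  induction k with
  | zero => simp
  | succ n ih =>
      calc ‖g (n+1)‖ ^ 2 ≤ ‖g n‖ ^ 2 / (1 + α * η) ^ 2 := step n
        _ ≤ (‖g 0‖ ^ 2 / (1 + α * η) ^ (2 * n)) / (1 + α * η) ^ 2 := by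
            apply div_le_div_of_nonneg_right ih (by positivity) |>.trans_eq rfl
        _ = ‖g 0‖ ^ 2 / (1 + α * η) ^ (2 * (n + 1)) := by
            rw [div_div, ← pow_add]; ring_nf
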